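/- Let G be a stratified ground program with an EDB/IDB partition, and let Q be an IDB query atom that is finitely recursive on G. Then for every stable model M' of Magic(Q,G) there exists a stable model M of G such that {a ∈ A : (left copy of) a ∈ M'} ⊆ M and Q ∈ M if and only if (the left copy of) Q ∈ M'. -/

import Mathlib

/-- A ground ASP rule over a type `A` of ground atoms: a finite nonempty head,
a finite positive body and a finite negative body. -/
structure GroundRule (A : Type) : Type where
  head : Set A
  pos : Set A
  neg : Set A
  head_fin : head.Finite
  pos_fin : pos.Finite
  neg_fin : neg.Finite
  head_ne : head.Nonempty

/-- An interpretation `I` satisfies a ground rule. -/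
def GroundRule.satisfiedBy {A : Type} (I : Set A) (r : GroundRule A) : Prop :=
  r.pos ⊆ I ∧ r.neg ∩ I = ∅ → (r.head ∩ I).Nonempty

/-- `I` is a model of the ground program `G`. -/
def isModel {A : Type} (I : Set A) (G : Set (GroundRule A)) : Prop :=
  ∀ r ∈ G, r.satisfiedBy I

/-- The rule obtained by deleting the negative body. -/
def GroundRule.reduce {A : Type} (r : GroundRule A) : GroundRule A :=
  ⟨r.head, r.pos, ∅, r.head_fin, r.pos_fin, Set.finite_empty, r.head_ne⟩

/-- The reduct `G^I`. -/
def reduct {A : Type} (G : Set (GroundRule A)) (I : Set A) : Set (GroundRule A) :=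
  {g | ∃ r ∈ G, r.neg ∩ I = ∅ ∧ g = r.reduce}

/-- `M` is a stable model of `G`: a ⊆-minimal model of the reduct `G^M`. -/
def isStableModel {A : Type} (G : Set (GroundRule A)) (M : Set A) : Prop :=
  isModel M (reduct G M) ∧ ∀ N ⊆ M, isModel N (reduct G M) → N = M

/-- Brave entailment: `Q` is in some stable model. -/
def braveEnt {A : Type} (G : Set (GroundRule A)) (Q : A) : Prop :=
  ∃ M, isStableModel G M ∧ Q ∈ M

/-- Cautious entailment: `Q` is in every stable model. -/
def cautiousEnt {A : Type} (G : Set (GroundRule A)) (Q : A) : Prop :=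
  ∀ M, isStableModel G M → Q ∈ M

/-- `X` is an unfounded set for `G` w.r.t. `I`. -/
def isUnfounded {A : Type} (G : Set (GroundRule A)) (I X : Set A) : Prop :=
  ∀ r ∈ G, (r.head ∩ X).Nonempty →
    ¬ r.pos ⊆ I ∨ (r.neg ∩ I).Nonempty ∨ (r.pos ∩ X).Nonempty ∨
      (r.head ∩ (I \ X)).Nonempty

/-- `G` is stratified: it admits a level mapping. -/
def isStratified {A : Type} (G : Set (GroundRule A)) : Prop :=
  ∃ lv : A → ℕ, ∀ r ∈ G, ∀ h ∈ r.head,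
    (∀ b ∈ r.pos, lv b ≤ lv h) ∧ (∀ b ∈ r.neg, lv b < lv h)

/-- The set `R(Q,G)` of atoms relevant for `Q` in `G` (the least set containing `Q`
and closed under rules whose head intersects it). -/
def relevantFor {A : Type} (G : Set (GroundRule A)) (Q : A) : Set A :=
  ⋂₀ {R : Set A | Q ∈ R ∧ ∀ r ∈ G, (r.head ∩ R).Nonempty → r.head ∪ r.pos ∪ r.neg ⊆ R}

/-- `Q` is finitely recursive on `G`. -/
def finitelyRecursive {A : Type} (G : Set (GroundRule A)) (Q : A) : Prop :=
  (relevantFor G Q).Finite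

/-- A fact: a singleton head and empty bodies. -/
def GroundRule.isFact {A : Type} (r : GroundRule A) : Prop :=
  (∃ a, r.head = {a}) ∧ r.pos = ∅ ∧ r.neg = ∅

/-- The fact with head `{a}`. -/
def factRule {A : Type} (a : A) : GroundRule A :=
  ⟨{a}, ∅, ∅, Set.finite_singleton a, Set.finite_empty, Set.finite_empty,
    Set.singleton_nonempty a⟩

/-- An EDB/IDB partition of a ground program: `idb` and `edb` are disjoint and
every rule of `edb` is a fact. -/
def isPartition {A : Type} (idb edb : Set (GroundRule A)) : Prop :=
  Disjoint idb edb ∧ ∀ r ∈ edb, r.isFact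

/-- `a` is an IDB atom: it occurs in the head of some IDB rule. -/
def isIDBAtom {A : Type} (idb : Set (GroundRule A)) (a : A) : Prop :=
  ∃ r ∈ idb, a ∈ r.head
/-- The magic rule `m(q) :- m(p)` (magic atoms live in the right copy of `A ⊕ A`). -/
def magicRule {A : Type} (q p : A) : GroundRule (A ⊕ A) :=
  ⟨{Sum.inr q}, {Sum.inr p}, ∅, Set.finite_singleton _, Set.finite_singleton _,
    Set.finite_empty, Set.singleton_nonempty _⟩

/-- The modified rule obtained from `r`: the head (left copies), the positive body
augmented with the magic atoms of all head atoms, and the negative body. -/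
def modifiedRule {A : Type} (r : GroundRule A) : GroundRule (A ⊕ A) :=
  ⟨Sum.inl '' r.head, Sum.inl '' r.pos ∪ Sum.inr '' r.head, Sum.inl '' r.neg,
    r.head_fin.image _, (r.pos_fin.image _).union (r.head_fin.image _),
    r.neg_fin.image _, r.head_ne.image _⟩

/-- Renaming the atoms of a rule along a function. -/
def GroundRule.map {A B : Type} (f : A → B) (r : GroundRule A) : GroundRule B :=
  ⟨f '' r.head, f '' r.pos, f '' r.neg, r.head_fin.image _, r.pos_fin.image _,
    r.neg_fin.image _, r.head_ne.image _⟩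

/-- The magic subprogram: the seed fact `m(Q).` together with all magic rules. -/
def magicSub {A : Type} (idb : Set (GroundRule A)) (Q : A) : Set (GroundRule (A ⊕ A)) :=
  {factRule (Sum.inr Q)} ∪
    {g | ∃ r ∈ idb, ∃ p ∈ r.head, ∃ q ∈ (r.head ∪ r.pos ∪ r.neg) \ {p},
      isIDBAtom idb q ∧ g = magicRule q p}

/-- The magic transform `Magic(Q,G)` of the program `G = idb ∪ edb`:
the seed fact, the magic rules, the modified rules and the EDB facts. -/
def magicProg {A : Type} (idb edb : Set (GroundRule A)) (Q : A) :
    Set (GroundRule (A ⊕ A)) :=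
  magicSub idb Q ∪ {g | ∃ r ∈ idb, g = modifiedRule r} ∪ GroundRule.map Sum.inl '' edb

/-- The least model of a program (the intersection of all its models);
for a definite program this is its least model. -/
def leastModel {A : Type} (G : Set (GroundRule A)) : Set A :=
  ⋂₀ {I | isModel I G}

/-- `M*`: the least model of the magic subprogram. -/
def Mstar {A : Type} (idb : Set (GroundRule A)) (Q : A) : Set (A ⊕ A) :=
  leastModel (magicSub idb Q)

/-- The killed atoms w.r.t. `N`: atoms (of the left copy) that are false in `N` and
are EDB atoms or whose magic atom is true in `N`. -/
def killed {A : Type} (idb : Set (GroundRule A)) (N : Set (A ⊕ A)) : Set A :=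
  {a | Sum.inl a ∉ N ∧ (¬ isIDBAtom idb a ∨ Sum.inr a ∈ N)}

/-- The magic variant of an interpretation `I`: the heads of the EDB facts,
`M*`, and the left copies of the atoms of `I` whose magic atom is in `M*`. -/
def magicVariant {A : Type} (idb edb : Set (GroundRule A)) (Q : A) (I : Set A) :
    Set (A ⊕ A) :=
  (⋃ r ∈ edb, Sum.inl '' r.head) ∪ Mstar idb Q ∪
    {x | ∃ a ∈ I, Sum.inr a ∈ Mstar idb Q ∧ x = Sum.inl a}

section MagicAux
open Set
open scoped Classical
variable {A : Type}

lemma fire {G : Set (GroundRule A)} {M I : Set A}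
    (h : isModel I (reduct G M)) {r : GroundRule A} (hr : r ∈ G)
    (hneg : r.neg ∩ M = ∅) (hpos : r.pos ⊆ I) : (r.head ∩ I).Nonempty :=
  h r.reduce ⟨r, hr, hneg, rfl⟩ ⟨hpos, Set.empty_inter I⟩

lemma univ_model (G : Set (GroundRule A)) : isModel Set.univ G := by
  intro r _ _
  rw [Set.inter_univ]
  exact r.head_ne

lemma chain_avoid {α : Type} {c : Set (Set α)} (hc : IsChain (· ⊆ ·) c)
    (hne : c.Nonempty) {s : Set α} (hs : s.Finite) :
    ∃ Y ∈ c, ∀ h ∈ s, h ∉ ⋂₀ c → h ∉ Y := by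
  refine Set.Finite.induction_on
    (motive := fun s _ => ∃ Y ∈ c, ∀ h ∈ s, h ∉ ⋂₀ c → h ∉ Y) s hs
    ⟨hne.choose, hne.choose_spec, by simp⟩ ?_
  intro a s ha hsf ih
  · 
    obtain ⟨Y₁, hY₁c, hY₁⟩ := ih
    by_cases hain : a ∈ ⋂₀ c
    · refine ⟨Y₁, hY₁c, ?_⟩
      intro h hh hnot
      rcases hh with rfl | hh
      · exact absurd hain hnot
      · exact hY₁ h hh hnot
    · obtain ⟨Ya, hYac, hYa⟩ : ∃ Ya ∈ c, a ∉ Ya := by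
        by_contra hcon
        push_neg at hcon
        exact hain fun Y hY => hcon Y hY
      rcases eq_or_ne Y₁ Ya with rfl | hne'
      · refine ⟨Y₁, hY₁c, ?_⟩
        intro h hh hnot
        rcases hh with rfl | hh
        · exact hYa
        · exact hY₁ h hh hnot
      · rcases hc.total hY₁c hYac with h12 | h21
        · refine ⟨Y₁, hY₁c, ?_⟩
          intro h hh hnot
          rcases hh with rfl | hh
          · exact fun hmem => hYa (h12 hmem)
          · exact hY₁ h hh hnot
        · refine ⟨Ya, hYac, ?_⟩
          intro h hh hnot
          rcases hh with rfl | hh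
          · exact hYa
          · exact fun hmem => hY₁ h hh hnot (h21 hmem)

def Alt (lv : A → ℕ) (n : ℕ) : Set A := {a | lv a < n}
def Lvl (lv : A → ℕ) (n : ℕ) : Set A := {a | lv a = n}

def RealY (G : Set (GroundRule A)) (lv : A → ℕ) (X : Set A) (n : ℕ) (Y : Set A) : Prop :=
  Y ⊆ Lvl lv n ∧ ∃ I, isModel I G ∧ I ∩ Alt lv n = X ∧ I ∩ Lvl lv n = Y

def Strat (G : Set (GroundRule A)) (lv : A → ℕ) : Prop :=
  ∀ r ∈ G, ∀ h ∈ r.head, (∀ b ∈ r.pos, lv b ≤ lv h) ∧ (∀ b ∈ r.neg, lv b < lv h)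

lemma real_min {G : Set (GroundRule A)} {lv : A → ℕ} (hstrat : Strat G lv) {X : Set A} {n : ℕ}
    (hX : X ⊆ Alt lv n) (hne : ∃ Y, RealY G lv X n Y) :
    ∃ Y, RealY G lv X n Y ∧ ∀ Z, RealY G lv X n Z → Z ⊆ Y → Z = Y := by
  obtain ⟨Y0, hY0⟩ := hne
  have hz := zorn_superset_nonempty {Y | RealY G lv X n Y} ?_ Y0 hY0
  · obtain ⟨m, _, hmin⟩ := hz
    exact ⟨m, hmin.1, fun Z hZ hZm => subset_antisymm hZm (hmin.2 hZ hZm)⟩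
  · intro c hcS hchain hcne
    refine ⟨⋂₀ c, ⟨?_, ?_⟩, fun s hs => sInter_subset_of_mem hs⟩
    · exact (sInter_subset_of_mem hcne.choose_spec).trans (hcS hcne.choose_spec).1
    · -- the model I* := X ∪ ⋂₀ c ∪ {a | n < lv a}
      refine ⟨X ∪ ⋂₀ c ∪ {a | n < lv a}, ?_, ?_, ?_⟩
      · intro r hr hsat
        obtain ⟨hpos, hneg⟩ := hsat
        by_cases hhi : ∃ h ∈ r.head, n < lv h
        · obtain ⟨h, hh, hlt⟩ := hhi
          exact ⟨h, hh, Or.inr hlt⟩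
        · push_neg at hhi
          obtain ⟨h₀, hh₀⟩ := r.head_ne
          by_cases hXw : (r.head ∩ X).Nonempty
          · obtain ⟨h, hh, hhX⟩ := hXw
            exact ⟨h, hh, Or.inl (Or.inl hhX)⟩
          · have hheadX : ∀ h ∈ r.head, h ∉ X := by
              intro h hh hhX; exact hXw ⟨h, hh, hhX⟩
            obtain ⟨Y₀, hY₀c, hY₀⟩ := chain_avoid hchain hcne r.head_fin
            obtain ⟨_, I₀, hI₀m, hI₀X, hI₀Y⟩ := (hcS hY₀c : RealY G lv X n Y₀)
            have hposI : r.pos ⊆ I₀ := by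
              intro b hb
              rcases hpos hb with (hbX | hbC) | hbhi
              · exact (hI₀X ▸ hbX : b ∈ I₀ ∩ Alt lv n).1
              · exact (hI₀Y ▸ (sInter_subset_of_mem hY₀c hbC) : b ∈ I₀ ∩ Lvl lv n).1
              · exact absurd ((hstrat r hr h₀ hh₀).1 b hb) (by
                  have := hhi h₀ hh₀
                  simp only [mem_setOf_eq] at hbhi
                  omega)
            have hnegI : r.neg ∩ I₀ = ∅ := by
              rw [Set.eq_empty_iff_forall_notMem]
              rintro b ⟨hb, hbI⟩
              have hblt : lv b < n := lt_of_lt_of_le ((hstrat r hr h₀ hh₀).2 b hb) (hhi h₀ hh₀)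
              have hbX : b ∈ X := by
                have : b ∈ I₀ ∩ Alt lv n := ⟨hbI, hblt⟩
                rw [hI₀X] at this; exact this
              have : b ∉ X ∪ ⋂₀ c ∪ {a | n < lv a} := by
                intro hmem
                exact (Set.eq_empty_iff_forall_notMem.mp hneg) b ⟨hb, hmem⟩
              exact this (Or.inl (Or.inl hbX))
            obtain ⟨h₁, hh₁, hh₁I⟩ := hI₀m r hr ⟨hposI, hnegI⟩
            have hlv₁ : lv h₁ = n := by
              rcases lt_or_eq_of_le (hhi h₁ hh₁) with hlt | heq
              · exact absurd ((hI₀X ▸ (⟨hh₁I, hlt⟩ : h₁ ∈ I₀ ∩ Alt lv n)) : h₁ ∈ X)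
                  (hheadX h₁ hh₁)
              · exact heq
            have hh₁Y : h₁ ∈ Y₀ := by
              have : h₁ ∈ I₀ ∩ Lvl lv n := ⟨hh₁I, hlv₁⟩
              rw [hI₀Y] at this; exact this
            have hh₁C : h₁ ∈ ⋂₀ c := by
              by_contra hno
              exact hY₀ h₁ hh₁ hno hh₁Y
            exact ⟨h₁, hh₁, Or.inl (Or.inr hh₁C)⟩
      · -- I* ∩ Alt = X
        ext a
        simp only [mem_inter_iff, mem_union, mem_setOf_eq, Alt]
        constructor
        · rintro ⟨(haX | haC) | hahi, halt⟩
          · exact haX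
          · have : a ∈ Lvl lv n := (hcS hcne.choose_spec).1 (sInter_subset_of_mem hcne.choose_spec haC)
            simp only [Lvl, mem_setOf_eq] at this
            omega
          · omega
        · intro haX
          exact ⟨Or.inl (Or.inl haX), hX haX⟩
      · -- I* ∩ Lvl = ⋂₀ c
        ext a
        simp only [mem_inter_iff, mem_union, mem_setOf_eq, Lvl]
        constructor
        · rintro ⟨(haX | haC) | hahi, halv⟩
          · have := hX haX
            simp only [Alt, mem_setOf_eq] at this; omega
          · exact haC
          · omega
        · intro haC
          have : a ∈ Lvl lv n := (hcS hcne.choose_spec).1 (sInter_subset_of_mem hcne.choose_spec haC)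
          simp only [Lvl, mem_setOf_eq] at this
          exact ⟨Or.inl (Or.inr haC), this⟩

noncomputable def selY (G : Set (GroundRule A)) (lv : A → ℕ) (n : ℕ) (X : Set A) : Set A :=
  if h : ∃ Y, RealY G lv X n Y ∧ ∀ Z, RealY G lv X n Z → Z ⊆ Y → Z = Y then h.choose else ∅

lemma selY_sub_lvl (G : Set (GroundRule A)) (lv : A → ℕ) (n : ℕ) (X : Set A) :
    selY G lv n X ⊆ Lvl lv n := by
  unfold selY
  split_ifs with h
  · exact h.choose_spec.1.1
  · exact Set.empty_subset _

noncomputable def XX (G : Set (GroundRule A)) (lv : A → ℕ) : ℕ → Set A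
  | 0 => ∅
  | n+1 => XX G lv n ∪ selY G lv n (XX G lv n)

def MM (G : Set (GroundRule A)) (lv : A → ℕ) : Set A := ⋃ n, XX G lv n

variable {G : Set (GroundRule A)} {lv : A → ℕ}

lemma inv (hstrat : Strat G lv) (n : ℕ) :
    XX G lv n ⊆ Alt lv n ∧ ∃ I, isModel I G ∧ I ∩ Alt lv n = XX G lv n := by
  induction n with
  | zero =>
    refine ⟨Set.empty_subset _, Set.univ, univ_model G, ?_⟩
    rw [Set.univ_inter]
    ext a
    simp only [Alt, XX, mem_setOf_eq, mem_empty_iff_false, iff_false]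
    omega
  | succ n ih =>
    obtain ⟨hsub, I, hI, hIX⟩ := ih
    have hne : ∃ Y, RealY G lv (XX G lv n) n Y :=
      ⟨I ∩ Lvl lv n, Set.inter_subset_right, I, hI, hIX, rfl⟩
    have hcond := real_min hstrat hsub hne
    have hspec : RealY G lv (XX G lv n) n (selY G lv n (XX G lv n)) ∧
        ∀ Z, RealY G lv (XX G lv n) n Z → Z ⊆ selY G lv n (XX G lv n) →
          Z = selY G lv n (XX G lv n) := by
      unfold selY
      rw [dif_pos hcond]
      exact hcond.choose_spec
    obtain ⟨⟨hYlvl, I', hI', hI'X, hI'Y⟩, _⟩ := hspec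
    constructor
    · show XX G lv n ∪ selY G lv n (XX G lv n) ⊆ Alt lv (n+1)
      intro a ha
      rcases ha with ha | ha
      · have := hsub ha
        simp only [Alt, mem_setOf_eq] at this ⊢; omega
      · have := hYlvl ha
        simp only [Lvl, mem_setOf_eq] at this
        simp only [Alt, mem_setOf_eq]; omega
    · refine ⟨I', hI', ?_⟩
      show I' ∩ Alt lv (n+1) = XX G lv n ∪ selY G lv n (XX G lv n)
      have : I' ∩ Alt lv (n+1) = (I' ∩ Alt lv n) ∪ (I' ∩ Lvl lv n) := by
        ext a
        simp only [mem_inter_iff, mem_union, Alt, Lvl, mem_setOf_eq]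
        constructor
        · rintro ⟨haI, hlt⟩
          rcases Nat.lt_succ_iff_lt_or_eq.mp hlt with h | h
          · exact Or.inl ⟨haI, h⟩
          · exact Or.inr ⟨haI, h⟩
        · rintro (⟨haI, h⟩ | ⟨haI, h⟩)
          · exact ⟨haI, by omega⟩
          · exact ⟨haI, by omega⟩
      rw [this, hI'X, hI'Y]

lemma selY_spec (hstrat : Strat G lv) (n : ℕ) :
    RealY G lv (XX G lv n) n (selY G lv n (XX G lv n)) ∧
    ∀ Z, RealY G lv (XX G lv n) n Z → Z ⊆ selY G lv n (XX G lv n) →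
      Z = selY G lv n (XX G lv n) := by
  obtain ⟨hsub, I, hI, hIX⟩ := inv hstrat n
  have hne : ∃ Y, RealY G lv (XX G lv n) n Y :=
    ⟨I ∩ Lvl lv n, Set.inter_subset_right, I, hI, hIX, rfl⟩
  have hcond := real_min hstrat hsub hne
  unfold selY
  rw [dif_pos hcond]
  exact hcond.choose_spec

lemma XX_mono {m n : ℕ} (h : m ≤ n) : XX G lv m ⊆ XX G lv n := by
  induction n, h using Nat.le_induction with
  | base => exact subset_rfl
  | succ n _ ih => exact ih.trans Set.subset_union_left

lemma XX_inter (hstrat : Strat G lv) {n k : ℕ} (h : n ≤ k) :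
    XX G lv k ∩ Alt lv n = XX G lv n := by
  induction k, h using Nat.le_induction with
  | base => exact Set.inter_eq_left.mpr (inv hstrat n).1
  | succ k hk ih =>
    show (XX G lv k ∪ selY G lv k (XX G lv k)) ∩ Alt lv n = XX G lv n
    rw [Set.union_inter_distrib_right, ih]
    have : selY G lv k (XX G lv k) ∩ Alt lv n = ∅ := by
      rw [Set.eq_empty_iff_forall_notMem]
      rintro a ⟨ha, halt⟩
      have := selY_sub_lvl G lv k (XX G lv k) ha
      simp only [Lvl, mem_setOf_eq] at this
      simp only [Alt, mem_setOf_eq] at halt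
      omega
    rw [this, Set.union_empty]

lemma MM_inter_alt (hstrat : Strat G lv) (n : ℕ) : MM G lv ∩ Alt lv n = XX G lv n := by
  apply subset_antisymm
  · rintro a ⟨haM, haAlt⟩
    obtain ⟨_, ⟨k, rfl⟩, hk⟩ := haM
    have : a ∈ XX G lv (max k n) := XX_mono (le_max_left k n) hk
    rw [← XX_inter hstrat (le_max_right k n)]
    exact ⟨this, haAlt⟩
  · intro a ha
    exact ⟨Set.mem_iUnion.mpr ⟨n, ha⟩, (inv hstrat n).1 ha⟩

lemma MM_inter_lvl (hstrat : Strat G lv) (n : ℕ) :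
    MM G lv ∩ Lvl lv n = selY G lv n (XX G lv n) := by
  have h1 : MM G lv ∩ Lvl lv n = (MM G lv ∩ Alt lv (n+1)) ∩ Lvl lv n := by
    ext a
    simp only [mem_inter_iff, Alt, Lvl, mem_setOf_eq]
    constructor
    · rintro ⟨h, h2⟩; exact ⟨⟨h, by omega⟩, h2⟩
    · rintro ⟨⟨h, _⟩, h2⟩; exact ⟨h, h2⟩
  rw [h1, MM_inter_alt hstrat (n+1)]
  show (XX G lv n ∪ selY G lv n (XX G lv n)) ∩ Lvl lv n = _
  rw [Set.union_inter_distrib_right]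
  have h2 : XX G lv n ∩ Lvl lv n = ∅ := by
    rw [Set.eq_empty_iff_forall_notMem]
    rintro a ⟨ha, halv⟩
    have := (inv hstrat n).1 ha
    simp only [Alt, mem_setOf_eq] at this
    simp only [Lvl, mem_setOf_eq] at halv
    omega
  rw [h2, Set.empty_union,
    Set.inter_eq_left.mpr (selY_sub_lvl G lv n (XX G lv n))]

lemma head_bound (r : GroundRule A) : ∃ n : ℕ, ∀ h ∈ r.head, lv h < n := by
  obtain ⟨N, hN⟩ := (r.head_fin.image lv).bddAbove
  exact ⟨N + 1, fun h hh => by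
    have := hN (Set.mem_image_of_mem lv hh)
    omega⟩

lemma MM_model (hstrat : Strat G lv) : isModel (MM G lv) G := by
  intro r hr hsat
  obtain ⟨hpos, hneg⟩ := hsat
  obtain ⟨n, hn⟩ := head_bound (lv := lv) r
  obtain ⟨h₀, hh₀⟩ := r.head_ne
  obtain ⟨_, I, hI, hIX⟩ := inv hstrat n
  have htrans : ∀ a, lv a < n → (a ∈ I ↔ a ∈ MM G lv) := by
    intro a ha
    constructor
    · intro h
      have : a ∈ XX G lv n := by rw [← hIX]; exact ⟨h, ha⟩
      exact Set.mem_iUnion.mpr ⟨n, this⟩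
    · intro h
      have : a ∈ XX G lv n := by rw [← MM_inter_alt hstrat n]; exact ⟨h, ha⟩
      rw [← hIX] at this; exact this.1
  have hposI : r.pos ⊆ I := fun b hb =>
    (htrans b (lt_of_le_of_lt ((hstrat r hr h₀ hh₀).1 b hb) (hn h₀ hh₀))).mpr (hpos hb)
  have hnegI : r.neg ∩ I = ∅ := by
    rw [Set.eq_empty_iff_forall_notMem]
    rintro b ⟨hb, hbI⟩
    have hblt : lv b < n := lt_trans ((hstrat r hr h₀ hh₀).2 b hb) (hn h₀ hh₀)
    have : b ∈ MM G lv := (htrans b hblt).mp hbI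
    exact (Set.eq_empty_iff_forall_notMem.mp hneg) b ⟨hb, this⟩
  obtain ⟨h₁, hh₁, hh₁I⟩ := hI r hr ⟨hposI, hnegI⟩
  exact ⟨h₁, hh₁, (htrans h₁ (hn h₁ hh₁)).mp hh₁I⟩

lemma MM_stable (hstrat : Strat G lv) : isStableModel G (MM G lv) := by
  constructor
  · rintro g ⟨r, hr, hneg, rfl⟩ ⟨hpos, _⟩
    exact MM_model hstrat r hr ⟨hpos, hneg⟩
  · intro N hNsub hN
    by_contra hne'
    have hex : ∃ n, ∃ a, a ∈ MM G lv ∧ a ∉ N ∧ lv a = n := by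
      have : ¬ MM G lv ⊆ N := fun h => hne' (subset_antisymm hNsub h)
      obtain ⟨a, haM, haN⟩ := Set.not_subset.mp this
      exact ⟨lv a, a, haM, haN, rfl⟩
    set k := Nat.find hex with hkdef
    obtain ⟨a, haM, haN, halv⟩ := Nat.find_spec hex
    have hkmin : ∀ b, b ∈ MM G lv → b ∉ N → k ≤ lv b := by
      intro b hbM hbN
      by_contra hlt
      exact Nat.find_min hex (by omega : lv b < k) ⟨b, hbM, hbN, rfl⟩
    have hNAlt : N ∩ Alt lv k = XX G lv k := by
      apply subset_antisymm
      · rw [← MM_inter_alt hstrat k]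
        exact Set.inter_subset_inter_left _ hNsub
      · intro b hb
        have hbM : b ∈ MM G lv ∩ Alt lv k := by rw [MM_inter_alt hstrat k]; exact hb
        refine ⟨?_, hbM.2⟩
        by_contra hbN
        have := hkmin b hbM.1 hbN
        have := hbM.2
        simp only [Alt, mem_setOf_eq] at this
        omega
    set I : Set A := (N ∩ Alt lv (k+1)) ∪ {a | k < lv a} with hIdef
    have hImodel : isModel I G := by
      intro r hr hsat
      obtain ⟨hpos, hneg⟩ := hsat
      by_cases hhi : ∃ h ∈ r.head, k < lv h
      · obtain ⟨h, hh, hlt⟩ := hhi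
        exact ⟨h, hh, Or.inr hlt⟩
      · push_neg at hhi
        obtain ⟨h₀, hh₀⟩ := r.head_ne
        have hposN : r.pos ⊆ N ∩ Alt lv (k+1) := by
          intro b hb
          rcases hpos hb with h | h
          · exact h
          · have h1 := (hstrat r hr h₀ hh₀).1 b hb
            have h2 := hhi h₀ hh₀
            simp only [mem_setOf_eq] at h
            omega
        have hnegM : r.neg ∩ MM G lv = ∅ := by
          rw [Set.eq_empty_iff_forall_notMem]
          rintro b ⟨hb, hbM⟩
          have hblt : lv b < k := lt_of_lt_of_le ((hstrat r hr h₀ hh₀).2 b hb) (hhi h₀ hh₀)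
          have hbX : b ∈ XX G lv k := by
            rw [← MM_inter_alt hstrat k]; exact ⟨hbM, hblt⟩
          have hbN : b ∈ N ∩ Alt lv k := by rw [hNAlt]; exact hbX
          have hbI : b ∈ I := Or.inl ⟨hbN.1, by
            have := hbN.2
            simp only [Alt, mem_setOf_eq] at this ⊢
            omega⟩
          exact (Set.eq_empty_iff_forall_notMem.mp hneg) b ⟨hb, hbI⟩
        obtain ⟨h₁, hh₁, hh₁N⟩ := fire hN hr hnegM (fun b hb => (hposN hb).1)
        refine ⟨h₁, hh₁, Or.inl ⟨hh₁N, ?_⟩⟩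
        have := hhi h₁ hh₁
        simp only [Alt, mem_setOf_eq]
        omega
    have hIAlt : I ∩ Alt lv k = XX G lv k := by
      rw [← hNAlt]
      ext b
      simp only [hIdef, mem_inter_iff, mem_union, Alt, mem_setOf_eq]
      constructor
      · rintro ⟨⟨hbN, _⟩ | hbk, hblt⟩
        · exact ⟨hbN, hblt⟩
        · omega
      · rintro ⟨hbN, hblt⟩
        exact ⟨Or.inl ⟨hbN, by omega⟩, hblt⟩
    have hILvl : I ∩ Lvl lv k = N ∩ Lvl lv k := by
      ext b
      simp only [hIdef, mem_inter_iff, mem_union, Alt, Lvl, mem_setOf_eq]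
      constructor
      · rintro ⟨⟨hbN, _⟩ | hbk, hbeq⟩
        · exact ⟨hbN, hbeq⟩
        · omega
      · rintro ⟨hbN, hbeq⟩
        exact ⟨Or.inl ⟨hbN, by omega⟩, hbeq⟩
    have hreal : RealY G lv (XX G lv k) k (N ∩ Lvl lv k) :=
      ⟨Set.inter_subset_right, I, hImodel, hIAlt, hILvl⟩
    have hsub' : N ∩ Lvl lv k ⊆ selY G lv k (XX G lv k) := by
      rw [← MM_inter_lvl hstrat k]
      exact Set.inter_subset_inter_left _ hNsub
    have heq := (selY_spec hstrat k).2 _ hreal hsub'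
    have haMk : a ∈ MM G lv ∩ Lvl lv k := ⟨haM, halv⟩
    rw [MM_inter_lvl hstrat k, ← heq] at haMk
    exact haN haMk.1

theorem exists_stable_of_stratified (G : Set (GroundRule A)) (hs : isStratified G) :
    ∃ M, isStableModel G M := by
  obtain ⟨lv, hlv⟩ := hs
  exact ⟨MM G lv, MM_stable hlv⟩

lemma stable_head_support {G : Set (GroundRule A)} {V : Set A} (h : isStableModel G V) :
    ∀ a ∈ V, ∃ r ∈ G, a ∈ r.head := by
  intro a haV
  by_contra hno
  have hmodel : isModel {b | b ∈ V ∧ ∃ r ∈ G, b ∈ r.head} (reduct G V) := by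
    rintro g ⟨r, hr, hneg, rfl⟩ ⟨hpos, _⟩
    obtain ⟨h₁, hh₁, hh₁V⟩ := fire h.1 hr hneg (fun b hb => (hpos hb).1)
    exact ⟨h₁, hh₁, hh₁V, r, hr, hh₁⟩
  have heq := h.2 _ (fun b hb => hb.1) hmodel
  rw [← heq] at haV
  exact hno haV.2

def topProg (G₂ : Set (GroundRule A)) (C L : Set A) : Set (GroundRule A) :=
  {g | ∃ r ∈ G₂, r.pos ∩ C ⊆ L ∧ r.neg ∩ C ∩ L = ∅ ∧ r.head ∩ C ∩ L = ∅ ∧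
    g.head = r.head \ C ∧ g.pos = r.pos \ C ∧ g.neg = r.neg \ C}

lemma combine_stable {G₁ G₂ : Set (GroundRule A)} {C L V : Set A}
    (hL : isStableModel G₁ L) (hLC : L ⊆ C)
    (hG₁ : ∀ r ∈ G₁, r.head ⊆ C ∧ r.pos ⊆ C ∧ r.neg ⊆ C)
    (hV : isStableModel (topProg G₂ C L) V) (hVC : V ∩ C = ∅)
    (hne : ∀ r ∈ G₂, r.head ∩ C ∩ L = ∅ → (r.head \ C).Nonempty) :
    isStableModel (G₁ ∪ G₂) (L ∪ V) := by
  have hMC : (L ∪ V) ∩ C = L := by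
    rw [Set.union_inter_distrib_right, Set.inter_eq_left.mpr hLC, hVC, Set.union_empty]
  have hMdC : (L ∪ V) \ C = V := by
    ext b
    constructor
    · rintro ⟨hb | hb, hbC⟩
      · exact absurd (hLC hb) hbC
      · exact hb
    · intro hb
      refine ⟨Or.inr hb, fun hbC => ?_⟩
      exact (Set.eq_empty_iff_forall_notMem.mp hVC) b ⟨hb, hbC⟩
  constructor
  · -- L ∪ V is a model of the reduct
    rintro g ⟨r, hr, hneg, rfl⟩ ⟨hpos, _⟩
    rcases hr with hr | hr
    · -- bottom rule
      have hposL : r.pos ⊆ L := by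
        intro b hb
        have : b ∈ (L ∪ V) ∩ C := ⟨hpos hb, (hG₁ r hr).2.1 hb⟩
        rwa [hMC] at this
      have hnegL : r.neg ∩ L = ∅ := by
        rw [Set.eq_empty_iff_forall_notMem]
        rintro b ⟨hb, hbL⟩
        exact (Set.eq_empty_iff_forall_notMem.mp hneg) b ⟨hb, Or.inl hbL⟩
      obtain ⟨h₁, hh₁, hh₁L⟩ := fire hL.1 hr hnegL hposL
      exact ⟨h₁, hh₁, Or.inl hh₁L⟩
    · -- top rule
      rcases Set.eq_empty_or_nonempty (r.head ∩ C ∩ L) with hempty | ⟨h₁, ⟨hh₁, _⟩, hh₁L⟩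
      · have hposC : r.pos ∩ C ⊆ L := by
          rintro b ⟨hb, hbC⟩
          have : b ∈ (L ∪ V) ∩ C := ⟨hpos hb, hbC⟩
          rwa [hMC] at this
        have hnegCL : r.neg ∩ C ∩ L = ∅ := by
          rw [Set.eq_empty_iff_forall_notMem]
          rintro b ⟨⟨hb, _⟩, hbL⟩
          exact (Set.eq_empty_iff_forall_notMem.mp hneg) b ⟨hb, Or.inl hbL⟩
        set g' : GroundRule A :=
          ⟨r.head \ C, r.pos \ C, r.neg \ C, r.head_fin.diff (t := C), r.pos_fin.diff (t := C),
            r.neg_fin.diff (t := C), hne r hr hempty⟩ with hg'def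
        have hg'T : g' ∈ topProg G₂ C L := ⟨r, hr, hposC, hnegCL, hempty, rfl, rfl, rfl⟩
        have hg'neg : g'.neg ∩ V = ∅ := by
          rw [Set.eq_empty_iff_forall_notMem]
          rintro b ⟨⟨hb, _⟩, hbV⟩
          exact (Set.eq_empty_iff_forall_notMem.mp hneg) b ⟨hb, Or.inr hbV⟩
        have hg'pos : g'.pos ⊆ V := by
          rintro b ⟨hb, hbC⟩
          rcases hpos hb with hbL | hbV
          · exact absurd (hLC hbL) hbC
          · exact hbV
        obtain ⟨h₁, ⟨hh₁, _⟩, hh₁V⟩ := fire hV.1 hg'T hg'neg hg'pos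
        exact ⟨h₁, hh₁, Or.inr hh₁V⟩
      · exact ⟨h₁, hh₁, Or.inl hh₁L⟩
  · -- minimality
    intro N hNsub hN
    have step1 : isModel (N ∩ C) (reduct G₁ L) := by
      rintro g ⟨r, hr, hnegL, rfl⟩ ⟨hpos, _⟩
      have hnegM : r.neg ∩ (L ∪ V) = ∅ := by
        rw [Set.eq_empty_iff_forall_notMem]
        rintro b ⟨hb, hbM⟩
        have hbC : b ∈ C := (hG₁ r hr).2.2 hb
        have : b ∈ (L ∪ V) ∩ C := ⟨hbM, hbC⟩
        rw [hMC] at this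
        exact (Set.eq_empty_iff_forall_notMem.mp hnegL) b ⟨hb, this⟩
      obtain ⟨h₁, hh₁, hh₁N⟩ := fire hN (Or.inl hr) hnegM (fun b hb => (hpos hb).1)
      exact ⟨h₁, hh₁, hh₁N, (hG₁ r hr).1 hh₁⟩
    have hNCsub : N ∩ C ⊆ L := by
      rw [← hMC]
      exact Set.inter_subset_inter_left _ hNsub
    have hNC := hL.2 _ hNCsub step1
    have hLN : L ⊆ N := by
      rw [← hNC]; exact fun b hb => hb.1
    have step2 : isModel (N \ C) (reduct (topProg G₂ C L) V) := by
      rintro g ⟨g', hg'T, hg'neg, rfl⟩ ⟨hpos, _⟩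
      obtain ⟨r, hr, hposC, hnegCL, hheadCL, hh, hp, hn⟩ := hg'T
      simp only [GroundRule.reduce] at hpos ⊢
      rw [hp] at hpos
      have hposN : r.pos ⊆ N := by
        intro b hb
        by_cases hbC : b ∈ C
        · exact hLN (hposC ⟨hb, hbC⟩)
        · exact (hpos ⟨hb, hbC⟩).1
      have hnegM : r.neg ∩ (L ∪ V) = ∅ := by
        rw [Set.eq_empty_iff_forall_notMem]
        rintro b ⟨hb, hbM⟩
        by_cases hbC : b ∈ C
        · have : b ∈ (L ∪ V) ∩ C := ⟨hbM, hbC⟩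
          rw [hMC] at this
          exact (Set.eq_empty_iff_forall_notMem.mp hnegCL) b ⟨⟨hb, hbC⟩, this⟩
        · have hbV : b ∈ V := by
            have : b ∈ (L ∪ V) \ C := ⟨hbM, hbC⟩
            rwa [hMdC] at this
          have : b ∈ g'.neg ∩ V := ⟨by rw [hn]; exact ⟨hb, hbC⟩, hbV⟩
          rw [hg'neg] at this
          exact this
      obtain ⟨h₁, hh₁, hh₁N⟩ := fire hN (Or.inr hr) hnegM hposN
      have hh₁C : h₁ ∉ C := by
        intro hbC
        have : h₁ ∈ N ∩ C := ⟨hh₁N, hbC⟩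
        rw [hNC] at this
        exact (Set.eq_empty_iff_forall_notMem.mp hheadCL) h₁ ⟨⟨hh₁, hbC⟩, this⟩
      exact ⟨h₁, by rw [hh]; exact ⟨hh₁, hh₁C⟩, hh₁N, hh₁C⟩
    have hNVsub : N \ C ⊆ V := by
      rw [← hMdC]
      exact Set.diff_subset_diff_left hNsub
    have hNV := hV.2 _ hNVsub step2
    have hVN : V ⊆ N := by
      rw [← hNV]; exact fun b hb => hb.1
    exact subset_antisymm hNsub (Set.union_subset hLN hVN)

end MagicAux
theorem magic_sound {A : Type} (idb edb : Set (GroundRule A)) (Q : A)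
    (hpart : isPartition idb edb) (hstrat : isStratified (idb ∪ edb))
    (hQ : isIDBAtom idb Q) (hfr : finitelyRecursive (idb ∪ edb) Q) :
    ∀ M' : Set (A ⊕ A), isStableModel (magicProg idb edb Q) M' →
      ∃ M : Set A, isStableModel (idb ∪ edb) M ∧ {a | Sum.inl a ∈ M'} ⊆ M ∧
        (Q ∈ M ↔ Sum.inl Q ∈ M') := by
  classical
  intro M' hM'
  obtain ⟨hmod, hmin⟩ := hM'
  set L : Set A := {a | Sum.inl a ∈ M'} with hLdef
  set mg : Set A := {a | Sum.inr a ∈ M'} with hmgdef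
  set C : Set A := {a | a ∈ mg ∨ ¬ isIDBAtom idb a ∨ ∃ r ∈ edb, a ∈ r.head} with hCdef
  set Act : Set (GroundRule A) := {r | r ∈ idb ∧ ∃ p ∈ r.head, p ∈ mg} with hActdef
  -- the seed is true
  have hseedP : factRule (Sum.inr Q) ∈ magicProg idb edb Q :=
    Or.inl (Or.inl (Or.inl rfl))
  have hQmg : Q ∈ mg := by
    obtain ⟨x, hx, hxM⟩ := fire hmod hseedP (Set.empty_inter _) (Set.empty_subset _)
    simp only [factRule, magicRule, Set.mem_singleton_iff] at hx
    subst hx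
    exact hxM
  -- magic propagation
  have hmagic : ∀ r ∈ idb, ∀ p ∈ r.head, p ∈ mg →
      ∀ q ∈ r.head ∪ r.pos ∪ r.neg, isIDBAtom idb q → q ∈ mg := by
    intro r hr p hp hpmg q hq hqIDB
    by_cases hqp : q = p
    · rwa [hqp]
    · have hrule : magicRule q p ∈ magicProg idb edb Q :=
        Or.inl (Or.inl (Or.inr ⟨r, hr, p, hp, q, ⟨hq, hqp⟩, hqIDB, rfl⟩))
      obtain ⟨x, hx, hxM⟩ := fire hmod hrule (Set.empty_inter _)
        (Set.singleton_subset_iff.mpr hpmg)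
      simp only [factRule, magicRule, Set.mem_singleton_iff] at hx
      subst hx
      exact hxM
  -- heads of edb facts are true
  have hfacts : ∀ r ∈ edb, ∀ a ∈ r.head, a ∈ L := by
    intro r hr a ha
    obtain ⟨⟨a', ha'⟩, hpos0, hneg0⟩ := hpart.2 r hr
    have hmem : GroundRule.map Sum.inl r ∈ magicProg idb edb Q := Or.inr ⟨r, hr, rfl⟩
    have hnegE : (GroundRule.map Sum.inl r).neg ∩ M' = ∅ := by
      show (Sum.inl '' r.neg) ∩ M' = ∅
      rw [hneg0, Set.image_empty, Set.empty_inter]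
    have hposE : (GroundRule.map Sum.inl r).pos ⊆ M' := by
      show Sum.inl '' r.pos ⊆ M'
      rw [hpos0, Set.image_empty]
      exact Set.empty_subset _
    obtain ⟨x, hx, hxM⟩ := fire hmod hmem hnegE hposE
    obtain ⟨b, hb, rfl⟩ := hx
    rw [ha', Set.mem_singleton_iff] at hb ha
    subst hb
    subst ha
    exact hxM
  -- every true (left) atom is covered
  have hLC : L ⊆ C := by
    have hmodel : isModel {x | x ∈ M' ∧ ∀ a, x = Sum.inl a → a ∈ C}
        (reduct (magicProg idb edb Q) M') := by
      rintro g ⟨r, hr, hneg, rfl⟩ ⟨hpos, _⟩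
      simp only [GroundRule.reduce] at hpos ⊢
      have hposM : r.pos ⊆ M' := fun b hb => (hpos hb).1
      rcases hr with (hr | hr) | hr
      · rcases hr with hr | hr
        · rw [Set.mem_singleton_iff] at hr
          subst hr
          exact ⟨Sum.inr Q, rfl, hQmg, fun a ha => absurd ha (by simp)⟩
        · obtain ⟨r₀, hr₀, p, hp, q, hq, hqIDB, rfl⟩ := hr
          obtain ⟨x, hx, hxM⟩ := fire hmod
            (Or.inl (Or.inl (Or.inr ⟨r₀, hr₀, p, hp, q, hq, hqIDB, rfl⟩)))
            hneg hposM
          simp only [factRule, magicRule, Set.mem_singleton_iff] at hx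
          subst hx
          exact ⟨Sum.inr q, rfl, hxM, fun a ha => absurd ha (by simp)⟩
      · obtain ⟨r₀, hr₀, rfl⟩ := hr
        simp only [modifiedRule] at hpos hposM hneg ⊢
        have hheadmg : ∀ p ∈ r₀.head, p ∈ mg := by
          intro p hp
          exact (hpos (Or.inr ⟨p, hp, rfl⟩)).1
        obtain ⟨x, hx, hxM⟩ := fire hmod (Or.inl (Or.inr ⟨r₀, hr₀, rfl⟩)) hneg hposM
        obtain ⟨h, hh, rfl⟩ := hx
        refine ⟨Sum.inl h, ⟨h, hh, rfl⟩, hxM, fun a ha => ?_⟩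
        rw [Sum.inl.injEq] at ha
        subst ha
        exact Or.inl (hheadmg h hh)
      · obtain ⟨r₀, hr₀, rfl⟩ := hr
        obtain ⟨x, hx, hxM⟩ := fire hmod (Or.inr ⟨r₀, hr₀, rfl⟩) hneg hposM
        obtain ⟨h, hh, rfl⟩ := hx
        refine ⟨Sum.inl h, ⟨h, hh, rfl⟩, hxM, fun a ha => ?_⟩
        rw [Sum.inl.injEq] at ha
        subst ha
        exact Or.inr (Or.inr ⟨r₀, hr₀, hh⟩)
    have hNM := hmin _ (fun x hx => hx.1) hmodel
    intro a haL
    have haM : Sum.inl a ∈ M' := haL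
    rw [← hNM] at haM
    exact haM.2 a rfl
  -- L is a stable model of the bottom program
  have hG₁L : isStableModel (Act ∪ edb) L := by
    constructor
    · rintro g ⟨r, hr, hnegL, rfl⟩ ⟨hposL, _⟩
      simp only [GroundRule.reduce] at hposL ⊢
      rcases hr with ⟨hidb, p₀, hp₀, hp₀mg⟩ | hedb
      · have hmemP : modifiedRule r ∈ magicProg idb edb Q := Or.inl (Or.inr ⟨r, hidb, rfl⟩)
        have hnegM' : (modifiedRule r).neg ∩ M' = ∅ := by
          rw [Set.eq_empty_iff_forall_notMem]
          rintro x ⟨hx, hxM⟩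
          obtain ⟨b, hb, rfl⟩ := hx
          exact (Set.eq_empty_iff_forall_notMem.mp hnegL) b ⟨hb, hxM⟩
        have hposM' : (modifiedRule r).pos ⊆ M' := by
          rintro x (⟨b, hb, rfl⟩ | ⟨p, hp, rfl⟩)
          · exact hposL hb
          · exact hmagic r hidb p₀ hp₀ hp₀mg p (Or.inl (Or.inl hp)) ⟨r, hidb, hp⟩
        obtain ⟨x, hx, hxM⟩ := fire hmod hmemP hnegM' hposM'
        obtain ⟨h, hh, rfl⟩ := hx
        exact ⟨h, hh, hxM⟩
      · obtain ⟨⟨a', ha'⟩, hpos0, hneg0⟩ := hpart.2 r hedb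
        refine ⟨a', ?_, hfacts r hedb a' ?_⟩ <;> (rw [ha']; exact rfl)
    · intro N hNL hNmod
      set N' : Set (A ⊕ A) := Sum.inl '' N ∪ {x | x ∈ M' ∧ ∃ a, x = Sum.inr a} with hN'def
      have hN'sub : N' ⊆ M' := by
        rintro x (⟨a, haN, rfl⟩ | ⟨hxM, _⟩)
        · exact hNL haN
        · exact hxM
      have hN'mod : isModel N' (reduct (magicProg idb edb Q) M') := by
        rintro g ⟨r, hr, hneg, rfl⟩ ⟨hpos, _⟩
        simp only [GroundRule.reduce] at hpos ⊢
        rcases hr with (hr | hr) | hr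
        · rcases hr with hr | hr
          · rw [Set.mem_singleton_iff] at hr
            subst hr
            exact ⟨Sum.inr Q, rfl, Or.inr ⟨hQmg, Q, rfl⟩⟩
          · obtain ⟨r₀, hr₀, p, hp, q, hq, hqIDB, rfl⟩ := hr
            have hpN' : Sum.inr p ∈ N' := hpos rfl
            have hpM : Sum.inr p ∈ M' := hN'sub hpN'
            have hqmg : q ∈ mg := hmagic r₀ hr₀ p hp hpM q hq.1 hqIDB
            exact ⟨Sum.inr q, rfl, Or.inr ⟨hqmg, q, rfl⟩⟩
        · obtain ⟨r₀, hr₀, rfl⟩ := hr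
          simp only [modifiedRule] at hpos hneg ⊢
          have hheadmg : ∀ p ∈ r₀.head, p ∈ mg := by
            intro p hp
            exact hN'sub (hpos (Or.inr ⟨p, hp, rfl⟩))
          obtain ⟨p₀, hp₀⟩ := r₀.head_ne
          have hAct : r₀ ∈ Act := ⟨hr₀, p₀, hp₀, hheadmg p₀ hp₀⟩
          have hposN : r₀.pos ⊆ N := by
            intro b hb
            rcases hpos (Or.inl ⟨b, hb, rfl⟩) with ⟨a, haN, heq⟩ | ⟨_, a, heq⟩
            · rw [Sum.inl.injEq] at heq
              exact heq ▸ haN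
            · exact absurd heq (by simp)
          have hnegL' : r₀.neg ∩ L = ∅ := by
            rw [Set.eq_empty_iff_forall_notMem]
            rintro b ⟨hb, hbL⟩
            exact (Set.eq_empty_iff_forall_notMem.mp hneg) (Sum.inl b) ⟨⟨b, hb, rfl⟩, hbL⟩
          obtain ⟨h, hh, hhN⟩ := fire hNmod (Or.inl hAct) hnegL' hposN
          exact ⟨Sum.inl h, ⟨h, hh, rfl⟩, Or.inl ⟨h, hhN, rfl⟩⟩
        · obtain ⟨r₀, hr₀, rfl⟩ := hr
          obtain ⟨⟨a', ha'⟩, hpos0, hneg0⟩ := hpart.2 r₀ hr₀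
          have hnegL' : r₀.neg ∩ L = ∅ := by rw [hneg0]; exact Set.empty_inter _
          have hposN : r₀.pos ⊆ N := by rw [hpos0]; exact Set.empty_subset _
          obtain ⟨h, hh, hhN⟩ := fire hNmod (Or.inr hr₀) hnegL' hposN
          exact ⟨Sum.inl h, ⟨h, hh, rfl⟩, Or.inl ⟨h, hhN, rfl⟩⟩
      have hN'eq := hmin _ hN'sub hN'mod
      apply subset_antisymm hNL
      intro a haL
      have haN' : Sum.inl a ∈ N' := by rw [hN'eq]; exact haL
      rcases haN' with ⟨b, hbN, heq⟩ | ⟨_, b, heq⟩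
      · rw [Sum.inl.injEq] at heq
        exact heq ▸ hbN
      · exact absurd heq (by simp)
  -- atoms of the bottom program are covered
  have hG₁C : ∀ r ∈ Act ∪ edb, r.head ⊆ C ∧ r.pos ⊆ C ∧ r.neg ⊆ C := by
    rintro r (⟨hidb, p₀, hp₀, hmg₀⟩ | hedb)
    · refine ⟨?_, ?_, ?_⟩
      · intro h hh
        exact Or.inl (hmagic r hidb p₀ hp₀ hmg₀ h (Or.inl (Or.inl hh)) ⟨r, hidb, hh⟩)
      · intro b hb
        by_cases hIDB : isIDBAtom idb b
        · exact Or.inl (hmagic r hidb p₀ hp₀ hmg₀ b (Or.inl (Or.inr hb)) hIDB)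
        · exact Or.inr (Or.inl hIDB)
      · intro b hb
        by_cases hIDB : isIDBAtom idb b
        · exact Or.inl (hmagic r hidb p₀ hp₀ hmg₀ b (Or.inr hb) hIDB)
        · exact Or.inr (Or.inl hIDB)
    · obtain ⟨⟨a', ha'⟩, hpos0, hneg0⟩ := hpart.2 r hedb
      refine ⟨fun h hh => Or.inr (Or.inr ⟨r, hedb, hh⟩), ?_, ?_⟩
      · rw [hpos0]; exact Set.empty_subset _
      · rw [hneg0]; exact Set.empty_subset _
  -- nonemptiness of stripped heads
  have hne' : ∀ r ∈ idb \ Act, r.head ∩ C ∩ L = ∅ → (r.head \ C).Nonempty := by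
    rintro r ⟨hidb, hnAct⟩ hempty
    obtain ⟨h₀, hh₀⟩ := r.head_ne
    refine ⟨h₀, hh₀, fun hC => ?_⟩
    rcases hC with hmg | hnIDB | ⟨f, hf, hhf⟩
    · exact hnAct ⟨hidb, h₀, hh₀, hmg⟩
    · exact hnIDB ⟨r, hidb, hh₀⟩
    · exact (Set.eq_empty_iff_forall_notMem.mp hempty) h₀
        ⟨⟨hh₀, Or.inr (Or.inr ⟨f, hf, hhf⟩)⟩, hfacts f hf h₀ hhf⟩
  -- the top program is stratified, take a stable model of it
  obtain ⟨lv, hlv⟩ := hstrat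
  have hTs : Strat (topProg (idb \ Act) C L) lv := by
    rintro g ⟨r, hrG₂, _, _, _, hh, hp, hn⟩ h hhg
    rw [hh] at hhg
    have hcond := hlv r (Or.inl hrG₂.1) h hhg.1
    constructor
    · intro b hb
      rw [hp] at hb
      exact hcond.1 b hb.1
    · intro b hb
      rw [hn] at hb
      exact hcond.2 b hb.1
  set V := MM (topProg (idb \ Act) C L) lv with hVdef
  have hVstable : isStableModel (topProg (idb \ Act) C L) V := MM_stable hTs
  have hVC : V ∩ C = ∅ := by
    rw [Set.eq_empty_iff_forall_notMem]
    rintro a ⟨haV, haC⟩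
    obtain ⟨g, hgT, hag⟩ := stable_head_support hVstable a haV
    obtain ⟨r, _, _, _, _, hh, _, _⟩ := hgT
    rw [hh] at hag
    exact hag.2 haC
  -- combine
  have hcomb := combine_stable hG₁L hLC hG₁C hVstable hVC hne'
  have hGeq : (Act ∪ edb) ∪ (idb \ Act) = idb ∪ edb := by
    ext r
    simp only [Set.mem_union, Set.mem_diff]
    constructor
    · rintro ((hr | hr) | ⟨hr, _⟩)
      · exact Or.inl hr.1
      · exact Or.inr hr
      · exact Or.inl hr
    · rintro (hr | hr)
      · by_cases hA : r ∈ Act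
        · exact Or.inl (Or.inl hA)
        · exact Or.inr ⟨hr, hA⟩
      · exact Or.inl (Or.inr hr)
  rw [hGeq] at hcomb
  refine ⟨L ∪ V, hcomb, fun a ha => Or.inl ha, ?_, ?_⟩
  · rintro (hQL | hQV)
    · exact hQL
    · exact absurd (Set.mem_inter hQV (Or.inl hQmg))
        (Set.eq_empty_iff_forall_notMem.mp hVC Q)
  · intro h
    exact Or.inl h
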